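/- For all integers n and δ with 2 ≤ δ ≤ n − 2, (e − 1) · n^δ · δ! < 2^{(δ+1)(n−1) − 2}, where e is Euler's number. -/
import Mathlib

lemma aux1 (m : ℕ) (hm : 3 ≤ m) : 2 * (m + 2) * m ≤ 2 ^ (m + 2) := by
  induction m, hm using Nat.le_induction with
  | base => norm_num
  | succ k hk ih =>
    calc 2 * (k + 1 + 2) * (k + 1) ≤ 2 * (2 * (k + 2) * k) := by nlinarith
      _ ≤ 2 * 2 ^ (k + 2) := Nat.mul_le_mul_left 2 ih
      _ = 2 ^ (k + 1 + 2) := by ring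

lemma key (δ : ℕ) (hδ : 2 ≤ δ) :
    ∀ n, δ + 2 ≤ n → n ^ δ * Nat.factorial δ * 8 ≤ 2 ^ ((δ + 1) * (n - 1)) := by
  induction δ, hδ using Nat.le_induction with
  | base =>
    intro n hn
    induction n, hn using Nat.le_induction with
    | base => norm_num [Nat.factorial]
    | succ n hn ih =>
      have h1 : (n + 1) ^ 2 * Nat.factorial 2 * 8 ≤ 8 * (n ^ 2 * Nat.factorial 2 * 8) := by
        have : (n + 1) ^ 2 ≤ 8 * n ^ 2 := by nlinarith
        calc (n + 1) ^ 2 * Nat.factorial 2 * 8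
            ≤ (8 * n ^ 2) * Nat.factorial 2 * 8 :=
              Nat.mul_le_mul_right 8 (Nat.mul_le_mul_right _ this)
          _ = 8 * (n ^ 2 * Nat.factorial 2 * 8) := by ring
      have h2 : 8 * (n ^ 2 * Nat.factorial 2 * 8) ≤ 8 * 2 ^ ((2 + 1) * (n - 1)) :=
        Nat.mul_le_mul_left 8 ih
      have h3 : (8 : ℕ) * 2 ^ ((2 + 1) * (n - 1)) = 2 ^ ((2 + 1) * (n - 1) + 3) := by
        rw [pow_add]; ring
      have h4 : (2 + 1) * (n - 1) + 3 = (2 + 1) * (n + 1 - 1) := by omega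
      calc (n + 1) ^ 2 * Nat.factorial 2 * 8
          ≤ 8 * 2 ^ ((2 + 1) * (n - 1)) := le_trans h1 h2
        _ = 2 ^ ((2 + 1) * (n + 1 - 1)) := by rw [h3, h4]
  | succ δ hδ ih =>
    intro n hn
    have h1 : n ^ δ * Nat.factorial δ * 8 ≤ 2 ^ ((δ + 1) * (n - 1)) := ih n (by omega)
    have hm : 3 ≤ n - 2 := by omega
    have hn2 : n - 2 + 2 = n := by omega
    have h2 : 2 * n * (n - 2) ≤ 2 ^ n := by
      have := aux1 (n - 2) hm
      rwa [hn2] at this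
    have h3 : (2:ℕ) ^ n = 2 * 2 ^ (n - 1) := by
      rw [← pow_succ']; congr 1; omega
    have h2' : n * (n - 2) ≤ 2 ^ (n - 1) := by
      apply Nat.le_of_mul_le_mul_left _ (by norm_num : 0 < 2)
      calc 2 * (n * (n - 2)) = 2 * n * (n - 2) := by ring
        _ ≤ 2 ^ n := h2
        _ = 2 * 2 ^ (n - 1) := h3
    have h4 : n * (δ + 1) ≤ 2 ^ (n - 1) := by
      have hd : δ + 1 ≤ n - 2 := by omega
      exact le_trans (Nat.mul_le_mul_left n hd) h2'
    have h5 : n ^ (δ + 1) * Nat.factorial (δ + 1) * 8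
        = (n * (δ + 1)) * (n ^ δ * Nat.factorial δ * 8) := by
      rw [Nat.factorial_succ, pow_succ]; ring
    calc n ^ (δ + 1) * Nat.factorial (δ + 1) * 8
        = (n * (δ + 1)) * (n ^ δ * Nat.factorial δ * 8) := h5
      _ ≤ 2 ^ (n - 1) * 2 ^ ((δ + 1) * (n - 1)) := Nat.mul_le_mul h4 h1
      _ = 2 ^ ((δ + 1 + 1) * (n - 1)) := by rw [← pow_add]; congr 1; ring

/-- For all integers n and δ with 2 ≤ δ ≤ n − 2,
(e − 1) · n^δ · δ! < 2^{(δ+1)(n−1) − 2}, where e is Euler's number. -/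
theorem stmt19 (n δ : ℕ) (hδ : 2 ≤ δ) (hn : δ ≤ n - 2) :
    (Real.exp 1 - 1) * (n : ℝ) ^ δ * (Nat.factorial δ : ℝ) <
      2 ^ ((δ + 1) * (n - 1) - 2) := by
  have hn' : δ + 2 ≤ n := by omega
  have hkey : n ^ δ * Nat.factorial δ * 8 ≤ 2 ^ ((δ + 1) * (n - 1)) := key δ hδ n hn'
  have hE : 2 ≤ (δ + 1) * (n - 1) := by
    have : 3 * 3 ≤ (δ + 1) * (n - 1) := Nat.mul_le_mul (by omega) (by omega)
    omega
  have hsplit : (2:ℕ) ^ ((δ + 1) * (n - 1)) = 2 ^ ((δ + 1) * (n - 1) - 2) * 4 := by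
    rw [show (4:ℕ) = 2 ^ 2 from rfl, ← pow_add]
    congr 1
    omega
  have hnat : n ^ δ * Nat.factorial δ * 2 ≤ 2 ^ ((δ + 1) * (n - 1) - 2) := by
    rw [hsplit] at hkey
    omega
  have hreal : ((n : ℝ) ^ δ * (Nat.factorial δ : ℝ)) * 2
      ≤ (2:ℝ) ^ ((δ + 1) * (n - 1) - 2) := by
    have := (Nat.cast_le (α := ℝ)).mpr hnat
    push_cast at this
    linarith
  have hpos : (0:ℝ) < (n : ℝ) ^ δ * (Nat.factorial δ : ℝ) := by
    have h1 : (0:ℝ) < (n:ℝ) := by exact_mod_cast (by omega : 0 < n)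
    have h2 : (0:ℝ) < (Nat.factorial δ : ℝ) := by exact_mod_cast Nat.factorial_pos δ
    exact mul_pos (pow_pos h1 δ) h2
  have he : Real.exp 1 - 1 < 2 := by
    have := Real.exp_one_lt_d9
    linarith
  calc (Real.exp 1 - 1) * (n : ℝ) ^ δ * (Nat.factorial δ : ℝ)
      < 2 * ((n : ℝ) ^ δ * (Nat.factorial δ : ℝ)) := by nlinarith
    _ ≤ 2 ^ ((δ + 1) * (n - 1) - 2) := by linarith
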